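/- Let τ > 0, η > 0, β > 0, let I_1,…,I_N > 0 with T = ∑_{j=1}^N I_j, and consider the simplified RDN system τ·dR_i/dt = −R_i + (β·R_i + I_i)/(η + G), τ·dG/dt = −G + ∑_{j=1}^N R_j with Jacobian J at its unique positive-G equilibrium (R*, G*), where G* = ((β − η) + √((η − β)² + 4T))/2 and R_i* = I_i/(η − β + G*). Then J is the arrowhead matrix [[a·I_N, b], [cᵀ, −1/τ]] with a = (−1 + β/(η + G*))/τ, b_i = −R_i*/(τ(η + G*)), c_j = 1/τ, and its characteristic polynomial equals χ_J(X) = (X − a)^{N−1} · ( (X − a)(X + 1/τ) + G*/(τ²(η + G*)) ). -/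

import Mathlib

open Polynomial

/-- The vector field of the simplified RDN system with inputs on
`(R_1, …, R_N, G)`: `dR_i/dt = (-R_i + (β R_i + I_i)/(η + G))/τ`,
`dG/dt = (-G + ∑_j R_j)/τ`. -/
noncomputable def rdnFieldI (N : ℕ) (τ β η : ℝ) (I : Fin N → ℝ)
    (x : (Fin N ⊕ Unit) → ℝ) : (Fin N ⊕ Unit) → ℝ :=
  fun i => match i with
  | Sum.inl i =>
      (-x (Sum.inl i) + (β * x (Sum.inl i) + I i) / (η + x (Sum.inr ()))) / τ
  | Sum.inr _ => (-x (Sum.inr ()) + ∑ j, x (Sum.inl j)) / τ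

/-- The Jacobian matrix of `F` at `p`: the matrix of partial derivatives of
the components of `F` with respect to the coordinates. -/
noncomputable def jacobian {n : Type*} [Fintype n] [DecidableEq n]
    (F : (n → ℝ) → n → ℝ) (p : n → ℝ) : Matrix n n ℝ :=
  Matrix.of fun i j => fderiv ℝ (fun x => F x i) p (Pi.single j 1)

/-- The `(N+1) × (N+1)` arrowhead matrix with upper-left block `a • I_N`,
last column `b`, last row `cᵀ`, and bottom-right entry `d`. -/
def arrowhead (N : ℕ) (a d : ℝ) (b c : Fin N → ℝ) :
    Matrix (Fin N ⊕ Unit) (Fin N ⊕ Unit) ℝ :=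
  Matrix.of fun i j =>
    match i, j with
    | Sum.inl i, Sum.inl j => if i = j then a else 0
    | Sum.inl i, Sum.inr _ => b i
    | Sum.inr _, Sum.inl j => c j
    | Sum.inr _, Sum.inr _ => d

lemma arrowhead_eq_fromBlocks (N : ℕ) (a d : ℝ) (b c : Fin N → ℝ) :
    arrowhead N a d b c =
      Matrix.fromBlocks (a • (1 : Matrix (Fin N) (Fin N) ℝ))
        (Matrix.of fun i (_ : Unit) => b i)
        (Matrix.of fun (_ : Unit) j => c j)
        (Matrix.of fun (_ _ : Unit) => d) := by
  ext i j
  rcases i with i | i <;> rcases j with j | j <;>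
    simp [arrowhead, Matrix.fromBlocks, Matrix.one_apply, Matrix.smul_apply, mul_ite,
      mul_one, mul_zero]

lemma arrowhead_det (N : ℕ) (hN : 1 ≤ N) (a d : ℝ) (ha : a ≠ 0) (b c : Fin N → ℝ) :
    (arrowhead N a d b c).det = a ^ (N - 1) * (a * d - ∑ j, b j * c j) := by
  obtain ⟨n, rfl⟩ : ∃ n, N = n + 1 := ⟨N - 1, (Nat.succ_pred_eq_of_pos hN).symm⟩
  rw [arrowhead_eq_fromBlocks]
  haveI : Invertible (a • (1 : Matrix (Fin (n + 1)) (Fin (n + 1)) ℝ)) :=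
    ⟨a⁻¹ • 1, by simp [Matrix.smul_mul, smul_smul, inv_mul_cancel₀ ha, mul_inv_cancel₀ ha],
      by simp [Matrix.smul_mul, smul_smul, inv_mul_cancel₀ ha, mul_inv_cancel₀ ha]⟩
  rw [Matrix.det_fromBlocks₁₁]
  have hdet1 : (a • (1 : Matrix (Fin (n + 1)) (Fin (n + 1)) ℝ)).det = a ^ (n + 1) := by
    simp [Matrix.det_smul]
  rw [hdet1]
  have hentry : ((Matrix.of fun (_ _ : Unit) => d) -
      (Matrix.of fun (_ : Unit) j => c j) * ⅟(a • (1 : Matrix (Fin (n + 1)) (Fin (n + 1)) ℝ)) *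
        (Matrix.of fun i (_ : Unit) => b i)).det
      = d - a⁻¹ * ∑ j, b j * c j := by
    have hinv : ⅟(a • (1 : Matrix (Fin (n + 1)) (Fin (n + 1)) ℝ)) = a⁻¹ • 1 :=
      invOf_eq_right_inv
        (by rw [Matrix.mul_smul, mul_one, smul_smul, inv_mul_cancel₀ ha, one_smul])
    rw [hinv]
    rw [Matrix.det_unique]
    simp only [Matrix.sub_apply, Matrix.mul_apply, Matrix.of_apply, Matrix.smul_apply,
      Matrix.one_apply, smul_eq_mul, mul_ite, mul_one, mul_zero, Finset.sum_ite_eq,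
      Finset.mem_univ, if_true, Finset.sum_ite_eq, Finset.sum_ite_eq']
    rw [Finset.mul_sum]
    congr 1
    exact Finset.sum_congr rfl fun j _ => by ring
  rw [hentry]
  have : (n + 1) - 1 = n := rfl
  rw [this, pow_succ]
  field_simp

lemma arrowhead_charpoly (N : ℕ) (hN : 1 ≤ N) (a d : ℝ) (b c : Fin N → ℝ) :
    (arrowhead N a d b c).charpoly =
      (X - C a) ^ (N - 1) * ((X - C a) * (X - C d) - C (∑ j, b j * c j)) := by
  apply Polynomial.eq_of_infinite_eval_eq
  apply Set.Infinite.mono (s := {a}ᶜ)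
  · intro x hx
    have hx' : x ≠ a := hx
    have h1 : Polynomial.eval x (arrowhead N a d b c).charpoly =
        (arrowhead N (x - a) (x - d) (fun i => -b i) (fun j => -c j)).det := by
      rw [Matrix.charpoly,
        show Polynomial.eval x (arrowhead N a d b c).charmatrix.det =
          (Polynomial.evalRingHom x) (arrowhead N a d b c).charmatrix.det from rfl,
        RingHom.map_det (Polynomial.evalRingHom x)]
      congr 1
      ext i j
      rcases i with i | i <;> rcases j with j | j <;>
        simp [Matrix.charmatrix_apply, arrowhead, Matrix.diagonal, Matrix.of_apply,
          RingHom.mapMatrix_apply, Matrix.map_apply] <;> split_ifs <;> simp_all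
    rw [Set.mem_setOf_eq, h1, arrowhead_det N hN _ _ (sub_ne_zero.mpr hx')]
    simp only [eval_mul, eval_pow, eval_sub, eval_X, eval_C, neg_mul_neg]
  · exact Set.Finite.infinite_compl (Set.finite_singleton a)

/-- At the unique positive-`G` equilibrium of the simplified RDN system with
positive inputs, the Jacobian is the arrowhead matrix
`[[a I_N, b], [cᵀ, -1/τ]]` with `a = (-1 + β/(η + G*))/τ`,
`b_i = -R_i*/(τ(η + G*))`, `c_j = 1/τ`, and its characteristic polynomial is
`(X - a)^(N-1) ((X - a)(X + 1/τ) + G*/(τ²(η + G*)))`. -/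
theorem rdn_jacobian_arrowhead_charpoly (N : ℕ) (hN : 1 ≤ N) (τ β η : ℝ)
    (I : Fin N → ℝ) (hτ : 0 < τ) (hη : 0 < η) (hβ : 0 < β)
    (hI : ∀ i, 0 < I i)
    (G : ℝ) (R : Fin N → ℝ)
    (hG : G = ((β - η) + Real.sqrt ((η - β) ^ 2 + 4 * ∑ j, I j)) / 2)
    (hR : ∀ i, R i = I i / (η - β + G))
    (p : (Fin N ⊕ Unit) → ℝ)
    (hp : p = Sum.elim R (fun _ => G)) :
    jacobian (rdnFieldI N τ β η I) p =
        arrowhead N ((-1 + β / (η + G)) / τ) (-1 / τ)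
          (fun i => -R i / (τ * (η + G))) (fun _ => 1 / τ) ∧
      (jacobian (rdnFieldI N τ β η I) p).charpoly =
        (X - C ((-1 + β / (η + G)) / τ)) ^ (N - 1) *
          ((X - C ((-1 + β / (η + G)) / τ)) * (X + C (1 / τ)) +
            C (G / (τ ^ 2 * (η + G)))) := by
  have hNe : Nonempty (Fin N) := Fin.pos_iff_nonempty.mp hN
  have hT : 0 < ∑ j, I j := Finset.sum_pos (fun i _ => hI i) Finset.univ_nonempty
  set s := Real.sqrt ((η - β) ^ 2 + 4 * ∑ j, I j) with hsdef
  have hs0 : 0 ≤ s := Real.sqrt_nonneg _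
  have hs2 : s ^ 2 = (η - β) ^ 2 + 4 * ∑ j, I j := Real.sq_sqrt (by positivity)
  have hG0 : 0 < G := by rw [hG]; nlinarith [hs2, hs0, hT]
  have hd0 : 0 < η - β + G := by rw [hG]; nlinarith [hs2, hs0, hT]
  have hηG : 0 < η + G := by linarith
  have hηG' : η + G ≠ 0 := ne_of_gt hηG
  have hτ' : τ ≠ 0 := ne_of_gt hτ
  have hd0' : η - β + G ≠ 0 := ne_of_gt hd0
  have hGeq : G * (η - β + G) = ∑ j, I j := by rw [hG]; linear_combination hs2 / 4
  have hsumR : ∑ j, R j = G := by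
    have h1 : ∑ j, R j = (∑ j, I j) / (η - β + G) := by
      rw [Finset.sum_div]; exact Finset.sum_congr rfl fun j _ => hR j
    rw [h1, ← hGeq]
    field_simp
  have hReq : ∀ i, β * R i + I i = R i * (η + G) := by
    intro i
    rw [hR i]
    field_simp
    ring
  have hpG : p (Sum.inr ()) = G := by rw [hp]; rfl
  have hpR : ∀ i, p (Sum.inl i) = R i := fun i => by rw [hp]; rfl
  have hproj : ∀ k : Fin N ⊕ Unit,
      HasFDerivAt (fun x : (Fin N ⊕ Unit) → ℝ => x k)
        (ContinuousLinearMap.proj k : ((Fin N ⊕ Unit) → ℝ) →L[ℝ] ℝ) p :=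
    fun k => by
      have h := (ContinuousLinearMap.proj (R := ℝ)
        (φ := fun _ : Fin N ⊕ Unit => ℝ) k).hasFDerivAt (x := p)
      exact h
  have hjac : jacobian (rdnFieldI N τ β η I) p =
      arrowhead N ((-1 + β / (η + G)) / τ) (-1 / τ)
        (fun i => -R i / (τ * (η + G))) (fun _ => 1 / τ) := by
    ext i j
    cases i with
    | inl i =>
      have hne : η + p (Sum.inr ()) ≠ 0 := by rw [hpG]; exact hηG'
      have hnum : HasFDerivAt (fun x : (Fin N ⊕ Unit) → ℝ => β * x (Sum.inl i) + I i)
          (β • (ContinuousLinearMap.proj (Sum.inl i) : ((Fin N ⊕ Unit) → ℝ) →L[ℝ] ℝ)) p :=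
        ((hproj (Sum.inl i)).const_mul β).add_const (I i)
      have hden : HasFDerivAt (fun x : (Fin N ⊕ Unit) → ℝ => η + x (Sum.inr ()))
          (ContinuousLinearMap.proj (Sum.inr ()) : ((Fin N ⊕ Unit) → ℝ) →L[ℝ] ℝ) p :=
        (hproj (Sum.inr ())).const_add η
      have hinv : HasFDerivAt (fun x : (Fin N ⊕ Unit) → ℝ => (η + x (Sum.inr ()))⁻¹)
          ((-((η + p (Sum.inr ())) ^ 2)⁻¹) •
            (ContinuousLinearMap.proj (Sum.inr ()) : ((Fin N ⊕ Unit) → ℝ) →L[ℝ] ℝ)) p :=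
        (hasDerivAt_inv hne).comp_hasFDerivAt p hden
      have hfull := (((hproj (Sum.inl i)).fun_neg.fun_add (hnum.fun_mul hinv)).mul_const τ⁻¹)
      have hfun : (fun x : (Fin N ⊕ Unit) → ℝ => rdnFieldI N τ β η I x (Sum.inl i)) =
          fun x : (Fin N ⊕ Unit) → ℝ =>
            (-x (Sum.inl i) + (β * x (Sum.inl i) + I i) * (η + x (Sum.inr ()))⁻¹) * τ⁻¹ := by
        funext x
        simp [rdnFieldI, div_eq_mul_inv]
      have hJ : jacobian (rdnFieldI N τ β η I) p (Sum.inl i) j =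
          fderiv ℝ (fun x : (Fin N ⊕ Unit) → ℝ =>
            (-x (Sum.inl i) + (β * x (Sum.inl i) + I i) * (η + x (Sum.inr ()))⁻¹) * τ⁻¹)
            p (Pi.single j 1) := by
        simp only [jacobian, Matrix.of_apply, hfun]
      rw [hJ, hfull.fderiv]
      cases j with
      | inl j =>
        simp only [ContinuousLinearMap.smul_apply, ContinuousLinearMap.add_apply,
          ContinuousLinearMap.neg_apply, ContinuousLinearMap.proj_apply,
          Pi.single_apply, smul_eq_mul]
        by_cases hij : i = j
        · subst hij
          rw [arrowhead]
          simp only [Matrix.of_apply, if_pos rfl, Sum.inl.injEq, reduceCtorEq, if_false,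
            if_true, mul_zero, mul_one, add_zero, zero_add, hpG]
          rw [div_eq_mul_inv, div_eq_mul_inv]
          ring
        · rw [arrowhead]
          simp only [Matrix.of_apply, if_neg hij]
          simp [hij, Ne.symm hij]
      | inr u =>
        cases u
        rw [arrowhead]
        simp only [Matrix.of_apply, ContinuousLinearMap.smul_apply,
          ContinuousLinearMap.add_apply, ContinuousLinearMap.neg_apply,
          ContinuousLinearMap.proj_apply, Pi.single_apply, smul_eq_mul]
        simp only [reduceCtorEq, if_false, if_pos rfl, hpG, hpR]
        rw [hReq i]
        field_simp
        try ring
        try exact Or.inl trivial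
        simp
    | inr u =>
      cases u
      have hsum : HasFDerivAt (fun x : (Fin N ⊕ Unit) → ℝ => ∑ j, x (Sum.inl j))
          (∑ j, (ContinuousLinearMap.proj (Sum.inl j) : ((Fin N ⊕ Unit) → ℝ) →L[ℝ] ℝ)) p :=
        HasFDerivAt.fun_sum fun j _ => hproj (Sum.inl j)
      have hfull := (((hproj (Sum.inr ())).fun_neg.fun_add hsum).mul_const τ⁻¹)
      have hfun : (fun x : (Fin N ⊕ Unit) → ℝ => rdnFieldI N τ β η I x (Sum.inr ())) =
          fun x : (Fin N ⊕ Unit) → ℝ =>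
            (-x (Sum.inr ()) + ∑ j, x (Sum.inl j)) * τ⁻¹ := by
        funext x
        simp [rdnFieldI, div_eq_mul_inv]
      have hJ : jacobian (rdnFieldI N τ β η I) p (Sum.inr ()) j =
          fderiv ℝ (fun x : (Fin N ⊕ Unit) → ℝ =>
            (-x (Sum.inr ()) + ∑ j, x (Sum.inl j)) * τ⁻¹) p (Pi.single j 1) := by
        simp only [jacobian, Matrix.of_apply, hfun]
      rw [hJ, hfull.fderiv]
      cases j with
      | inl j =>
        rw [arrowhead]
        simp only [Matrix.of_apply, ContinuousLinearMap.smul_apply,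
          ContinuousLinearMap.add_apply, ContinuousLinearMap.neg_apply,
          ContinuousLinearMap.sum_apply, ContinuousLinearMap.proj_apply,
          Pi.single_apply, smul_eq_mul]
        simp [Sum.inl.injEq, Finset.sum_ite_eq, div_eq_mul_inv]
      | inr u =>
        cases u
        rw [arrowhead]
        simp only [Matrix.of_apply, ContinuousLinearMap.smul_apply,
          ContinuousLinearMap.add_apply, ContinuousLinearMap.neg_apply,
          ContinuousLinearMap.sum_apply, ContinuousLinearMap.proj_apply,
          Pi.single_apply, smul_eq_mul]
        simp [div_eq_mul_inv]
  refine ⟨hjac, ?_⟩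
  rw [hjac, arrowhead_charpoly N hN]
  have hc : ∑ j, -R j / (τ * (η + G)) * (1 / τ) = -(G / (τ ^ 2 * (η + G))) := by
    have h1 : ∀ j, -R j / (τ * (η + G)) * (1 / τ) = R j * (-(1 / (τ ^ 2 * (η + G)))) := by
      intro j
      field_simp
      try ring
      try exact Or.inl trivial
    rw [Finset.sum_congr rfl fun j _ => h1 j, ← Finset.sum_mul, hsumR]
    ring
  rw [hc, show (-1 / τ : ℝ) = -(1 / τ) by ring, map_neg, map_neg, sub_neg_eq_add,
    sub_neg_eq_add]
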